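/- Let B be a nonzero m×n real matrix with n ≥ 1, let Δ be real with 0 < Δ ≤ 1/2, and let q be a natural number with q ≥ (4/Δ)·ln(n/Δ). If z is drawn uniformly at random from {−1, 1}ⁿ, then with probability at least 1/2 the vector ŷ = (BᵀB)^q·z satisfies both ‖ŷ‖ ≥ λmax(BᵀB)^q/n and ‖B·ŷ‖ ≥ (1 − Δ/2)·‖B‖·‖ŷ‖. -/

import Mathlib

open Matrix Polynomial Set

/-- Euclidean norm of a vector in `ℝⁿ`. -/
noncomputable def vecNorm {n : ℕ} (v : Fin n → ℝ) : ℝ :=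
  Real.sqrt (∑ i, v i ^ 2)

/-- Spectral (operator) norm of a real matrix. -/
noncomputable def matNorm {m n : ℕ} (A : Matrix (Fin m) (Fin n) ℝ) : ℝ :=
  sSup {c : ℝ | ∃ v : Fin n → ℝ, vecNorm v ≤ 1 ∧ c = vecNorm (A.mulVec v)}

/-- Largest eigenvalue of a square real matrix. -/
noncomputable def lmax {n : ℕ} (A : Matrix (Fin n) (Fin n) ℝ) : ℝ :=
  sSup {μ : ℝ | ∃ v : Fin n → ℝ, v ≠ 0 ∧ A.mulVec v = μ • v}

/-- Smallest eigenvalue of a square real matrix. -/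
noncomputable def lmin {n : ℕ} (A : Matrix (Fin n) (Fin n) ℝ) : ℝ :=
  sInf {μ : ℝ | ∃ v : Fin n → ℝ, v ≠ 0 ∧ A.mulVec v = μ • v}

/-- A matrix is tridiagonal if `T i j = 0` whenever `|i - j| > 1`. -/
def IsTridiagonal {k : ℕ} (T : Matrix (Fin k) (Fin k) ℝ) : Prop :=
  ∀ i j : Fin k, 1 < |(i : ℤ) - (j : ℤ)| → T i j = 0

/-- The matrix function `f(A)` of a real symmetric matrix, defined through the
eigendecomposition `A = V Λ Vᵀ` as `V f(Λ) Vᵀ`. -/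
noncomputable def matFun {n : ℕ} {A : Matrix (Fin n) (Fin n) ℝ} (hA : A.IsHermitian)
    (f : ℝ → ℝ) : Matrix (Fin n) (Fin n) ℝ :=
  (hA.eigenvectorUnitary : Matrix (Fin n) (Fin n) ℝ) * Matrix.diagonal (f ∘ hA.eigenvalues) *
    star (hA.eigenvectorUnitary : Matrix (Fin n) (Fin n) ℝ)

/-- The `i`-th Chebyshev polynomial of the first kind, shifted and stretched to the range
`[lmin A - η, lmax A + η]`: with `r_max = lmax A + η`, `r_min = lmin A - η` and
`δ = 2 / (r_max - r_min)`, this is `y ↦ T_i (δ (y - r_min) - 1)`. -/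
noncomputable def shiftedCheb {n : ℕ} (A : Matrix (Fin n) (Fin n) ℝ) (η : ℝ) (i : ℕ) :
    Polynomial ℝ :=
  (Polynomial.Chebyshev.T ℝ i).comp
    (Polynomial.C (2 / ((lmax A + η) - (lmin A - η))) *
      (Polynomial.X - Polynomial.C (lmin A - η)) - 1)

/- ======================= Auxiliary machinery ======================= -/

namespace PMaux

open scoped RealInnerProductSpace

/-- Reinterpret a plain vector as an element of Euclidean space. -/
noncomputable def toE {n : ℕ} (v : Fin n → ℝ) : EuclideanSpace ℝ (Fin n) :=
  (WithLp.equiv 2 (Fin n → ℝ)).symm v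

lemma vecNorm_eq {n : ℕ} (v : Fin n → ℝ) : vecNorm v = ‖toE v‖ := by
  rw [EuclideanSpace.norm_eq]
  simp [toE, vecNorm, sq_abs]

lemma vecNorm_nonneg {n : ℕ} (v : Fin n → ℝ) : 0 ≤ vecNorm v := Real.sqrt_nonneg _

lemma inner_toE' {n : ℕ} (x : EuclideanSpace ℝ (Fin n)) (y : Fin n → ℝ) :
    ⟪x, toE y⟫ = (⇑x) ⬝ᵥ y := by
  simp [toE, PiLp.inner_apply, dotProduct, mul_comm]

variable {n : ℕ} {A : Matrix (Fin n) (Fin n) ℝ}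

/-- Coordinates of a vector in the orthonormal eigenbasis of a hermitian matrix. -/
noncomputable def coords (hA : A.IsHermitian) (v : Fin n → ℝ) : Fin n → ℝ := fun i =>
  hA.eigenvectorBasis.repr (toE v) i

lemma coords_eq_inner (hA : A.IsHermitian) (v : Fin n → ℝ) (i : Fin n) :
    coords hA v i = ⟪hA.eigenvectorBasis i, toE v⟫ :=
  hA.eigenvectorBasis.repr_apply_apply (toE v) i

lemma dot_symm (hA : A.IsHermitian) (x y : Fin n → ℝ) :
    (A.mulVec x) ⬝ᵥ y = x ⬝ᵥ (A.mulVec y) := by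
  rw [Matrix.dotProduct_mulVec, ← Matrix.mulVec_transpose, show Aᵀ = A from hA]

lemma coords_mulVec (hA : A.IsHermitian) (v : Fin n → ℝ) (i : Fin n) :
    coords hA (A.mulVec v) i = hA.eigenvalues i * coords hA v i := by
  rw [coords_eq_inner, coords_eq_inner, inner_toE', inner_toE',
    ← dot_symm hA, hA.mulVec_eigenvectorBasis, smul_dotProduct, smul_eq_mul]

lemma coords_pow_mulVec (hA : A.IsHermitian) (q : ℕ) (v : Fin n → ℝ) (i : Fin n) :
    coords hA ((A ^ q).mulVec v) i = hA.eigenvalues i ^ q * coords hA v i := by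
  induction q with
  | zero => simp [Matrix.one_mulVec]
  | succ k ih =>
      have h : (A ^ (k + 1)).mulVec v = A.mulVec ((A ^ k).mulVec v) := by
        rw [Matrix.mulVec_mulVec, ← pow_succ']
      rw [h, coords_mulVec hA, ih, pow_succ]
      ring

lemma sum_coords_sq (hA : A.IsHermitian) (v : Fin n → ℝ) :
    ∑ i, coords hA v i ^ 2 = ∑ i, v i ^ 2 := by
  have h1 : ‖hA.eigenvectorBasis.repr (toE v)‖ = ‖toE v‖ :=
    hA.eigenvectorBasis.repr.norm_map (toE v)
  rw [EuclideanSpace.norm_eq, EuclideanSpace.norm_eq] at h1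
  rw [Real.sqrt_inj (by positivity) (by positivity)] at h1
  simpa [coords, toE, sq_abs] using h1

lemma vecNorm_sq_coords (hA : A.IsHermitian) (v : Fin n → ℝ) :
    vecNorm v ^ 2 = ∑ i, coords hA v i ^ 2 := by
  rw [sum_coords_sq, vecNorm, Real.sq_sqrt (by positivity)]

lemma vecNorm_sq_dot (v : Fin n → ℝ) : vecNorm v ^ 2 = v ⬝ᵥ v := by
  rw [vecNorm, Real.sq_sqrt (by positivity)]
  simp [dotProduct, sq]

lemma inner_coords (hA : A.IsHermitian) (x y : Fin n → ℝ) :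
    x ⬝ᵥ y = ∑ i, coords hA x i * coords hA y i := by
  have h : ⟪toE x, toE y⟫ = x ⬝ᵥ y := inner_toE' (toE x) y
  have h2 := hA.eigenvectorBasis.repr.inner_map_map (toE x) (toE y)
  rw [h] at h2
  rw [← h2, PiLp.inner_apply]
  simp [coords, mul_comm]

lemma toE_coe (x : EuclideanSpace ℝ (Fin n)) : toE (⇑x) = x := rfl

lemma coords_basis (hA : A.IsHermitian) (i j : Fin n) :
    coords hA (⇑(hA.eigenvectorBasis i)) j = if j = i then 1 else 0 := by
  rw [coords, toE_coe, hA.eigenvectorBasis.repr_self, EuclideanSpace.single_apply]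

lemma basis_coe_ne_zero (hA : A.IsHermitian) (i : Fin n) :
    (⇑(hA.eigenvectorBasis i) : Fin n → ℝ) ≠ 0 := by
  intro h
  have h0 : hA.eigenvectorBasis i = 0 := by
    rw [← toE_coe (hA.eigenvectorBasis i), h]; rfl
  exact hA.eigenvectorBasis.orthonormal.ne_zero i h0

lemma vecNorm_basis (hA : A.IsHermitian) (i : Fin n) :
    vecNorm (⇑(hA.eigenvectorBasis i)) = 1 := by
  rw [vecNorm_eq, toE_coe]
  exact hA.eigenvectorBasis.orthonormal.1 i

variable {m : ℕ}

lemma isHermAtA (B : Matrix (Fin m) (Fin n) ℝ) : (Bᵀ * B).IsHermitian := by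
  have h := Matrix.isHermitian_conjTranspose_mul_self B
  simpa using h

lemma eig_nonneg (B : Matrix (Fin m) (Fin n) ℝ) (hA : (Bᵀ * B).IsHermitian) (i : Fin n) :
    0 ≤ hA.eigenvalues i := by
  have h : (Bᵀ * B).PosSemidef := by
    have := Matrix.posSemidef_conjTranspose_mul_self B
    simpa using this
  exact h.eigenvalues_nonneg i

lemma vecNorm_mulVec_sq (B : Matrix (Fin m) (Fin n) ℝ) (hA : (Bᵀ * B).IsHermitian)
    (w : Fin n → ℝ) :
    vecNorm (B.mulVec w) ^ 2 = ∑ i, hA.eigenvalues i * coords hA w i ^ 2 := by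
  rw [vecNorm_sq_dot]
  have h1 : (B.mulVec w) ⬝ᵥ (B.mulVec w) = w ⬝ᵥ ((Bᵀ * B).mulVec w) := by
    rw [Matrix.dotProduct_mulVec, ← Matrix.mulVec_transpose, Matrix.mulVec_mulVec,
      dotProduct_comm]
  rw [h1, inner_coords hA]
  refine Finset.sum_congr rfl fun i _ => ?_
  rw [coords_mulVec hA]
  ring

lemma eq_zero_of_sum_sq (v : Fin n → ℝ) (h : ∑ i, v i ^ 2 = 0) : v = 0 := by
  funext i
  have := (Finset.sum_eq_zero_iff_of_nonneg (fun j _ => sq_nonneg (v j))).1 h i (Finset.mem_univ i)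
  exact pow_eq_zero_iff (n := 2) (by norm_num) |>.1 this

lemma coords_smul (hA : A.IsHermitian) (μ : ℝ) (v : Fin n → ℝ)
    (i : Fin n) : coords hA (μ • v) i = μ * coords hA v i := by
  have h : toE (μ • v) = μ • toE v := rfl
  rw [coords, h, _root_.map_smul]
  rfl

lemma matNorm_eq (B : Matrix (Fin m) (Fin n) ℝ) (hA : (Bᵀ * B).IsHermitian) (i₀ : Fin n)
    (hmax : ∀ i, hA.eigenvalues i ≤ hA.eigenvalues i₀) :
    matNorm B = Real.sqrt (hA.eigenvalues i₀) := by
  have h0 : 0 ≤ hA.eigenvalues i₀ := eig_nonneg B hA i₀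
  refine IsGreatest.csSup_eq ⟨?_, ?_⟩
  · refine ⟨⇑(hA.eigenvectorBasis i₀), le_of_eq (vecNorm_basis hA i₀), ?_⟩
    have hsq : vecNorm (B.mulVec (⇑(hA.eigenvectorBasis i₀))) ^ 2 = hA.eigenvalues i₀ := by
      rw [vecNorm_mulVec_sq B hA]
      rw [Finset.sum_eq_single i₀]
      · rw [coords_basis hA]; simp
      · intro j _ hj; rw [coords_basis hA]; simp [hj]
      · intro h; exact absurd (Finset.mem_univ i₀) h
    rw [← hsq, Real.sqrt_sq (vecNorm_nonneg _)]
  · rintro c ⟨v, hv1, rfl⟩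
    rw [Real.le_sqrt (vecNorm_nonneg _) h0, vecNorm_mulVec_sq B hA]
    calc ∑ i, hA.eigenvalues i * coords hA v i ^ 2
        ≤ ∑ i, hA.eigenvalues i₀ * coords hA v i ^ 2 := by
          refine Finset.sum_le_sum fun i _ => ?_
          exact mul_le_mul_of_nonneg_right (hmax i) (sq_nonneg _)
      _ = hA.eigenvalues i₀ * vecNorm v ^ 2 := by
          rw [vecNorm_sq_coords hA, Finset.mul_sum]
      _ ≤ hA.eigenvalues i₀ * 1 := by
          refine mul_le_mul_of_nonneg_left ?_ h0
          calc vecNorm v ^ 2 ≤ 1 ^ 2 :=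
                pow_le_pow_left₀ (vecNorm_nonneg v) hv1 2
            _ = 1 := one_pow 2
      _ = hA.eigenvalues i₀ := mul_one _

lemma lmax_eq (hA : A.IsHermitian) (i₀ : Fin n)
    (hmax : ∀ i, hA.eigenvalues i ≤ hA.eigenvalues i₀) :
    lmax A = hA.eigenvalues i₀ := by
  refine IsGreatest.csSup_eq ⟨?_, ?_⟩
  · exact ⟨⇑(hA.eigenvectorBasis i₀), basis_coe_ne_zero hA i₀, hA.mulVec_eigenvectorBasis i₀⟩
  · rintro μ ⟨v, hv0, hv⟩
    have hcoords : ∀ i, hA.eigenvalues i * coords hA v i = μ * coords hA v i := by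
      intro i
      rw [← coords_mulVec hA, hv, coords_smul hA]
    have hex : ∃ j, coords hA v j ≠ 0 := by
      by_contra h
      push_neg at h
      apply hv0
      apply eq_zero_of_sum_sq
      rw [← sum_coords_sq hA]
      exact Finset.sum_eq_zero fun i _ => by rw [h i]; ring
    obtain ⟨j, hj⟩ := hex
    have hμ : hA.eigenvalues j = μ := by
      exact mul_right_cancel₀ hj (hcoords j)
    rw [← hμ]
    exact hmax j

lemma le_of_sq_le_sq {a b : ℝ} (hb : 0 ≤ b) (h : a ^ 2 ≤ b ^ 2) (ha : 0 ≤ a) : a ≤ b := by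
  nlinarith

lemma pm_analytic (n : ℕ) (hn : 1 ≤ n) (Δ : ℝ) (hΔ0 : 0 < Δ) (hΔ : Δ ≤ 1/2) (q : ℕ)
    (hq : 4 / Δ * Real.log ((n : ℝ) / Δ) ≤ (q : ℝ)) :
    ((1 - Δ/2)^2)^(2*q+1) * (n : ℝ)^2 ≤ 1 - (1 - Δ/2)^2 := by
  have hn' : (1 : ℝ) ≤ n := by exact_mod_cast hn
  have hn0 : (0 : ℝ) < n := by linarith
  have hb0 : 0 ≤ 1 - Δ/2 := by linarith
  have hb1 : 1 - Δ/2 ≤ 1 := by linarith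
  set x : ℝ := (n : ℝ) / Δ with hx
  have hx2 : (2 : ℝ) ≤ x := by
    rw [hx, le_div_iff₀ hΔ0]; nlinarith
  have hx0 : (0 : ℝ) < x := by linarith
  have hL0 : 0 ≤ Real.log x := Real.log_nonneg (by linarith)
  have s1 : ((1 - Δ/2)^2)^(2*q+1) ≤ (1 - Δ/2)^(4*q) := by
    rw [← pow_mul]
    exact pow_le_pow_of_le_one hb0 hb1 (by omega)
  have s2 : (1 - Δ/2)^(4*q) ≤ Real.exp (-(2 * q * Δ)) := by
    have h1 : 1 - Δ/2 ≤ Real.exp (-(Δ/2)) := by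
      have := Real.add_one_le_exp (-(Δ/2)); linarith
    calc (1 - Δ/2)^(4*q) ≤ Real.exp (-(Δ/2)) ^ (4*q) :=
          pow_le_pow_left₀ hb0 h1 (4*q)
      _ = Real.exp ((4*q : ℕ) * (-(Δ/2))) := (Real.exp_nat_mul _ _).symm
      _ = Real.exp (-(2 * q * Δ)) := by push_cast; ring_nf
  have s3 : Real.exp (-(2 * q * Δ)) ≤ (Δ / n)^8 := by
    have h8 : 8 * Real.log x ≤ 2 * q * Δ := by
      have hmul := mul_le_mul_of_nonneg_left hq (le_of_lt hΔ0)
      have h4 : Δ * (4 / Δ * Real.log x) = 4 * Real.log x := by field_simp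
      rw [h4] at hmul
      nlinarith [hL0]
    calc Real.exp (-(2 * q * Δ)) ≤ Real.exp (-(8 * Real.log x)) :=
          Real.exp_le_exp.2 (by linarith)
      _ = Real.exp (-(Real.log x)) ^ 8 := by
          rw [← Real.exp_nat_mul]; norm_num
      _ = (x⁻¹) ^ 8 := by rw [Real.exp_neg, Real.exp_log hx0]
      _ = (Δ / n)^8 := by rw [hx, inv_div]
  have s4 : (Δ / n)^8 * (n:ℝ)^2 ≤ 1 - (1 - Δ/2)^2 := by
    have e1 : (Δ / n)^8 * (n:ℝ)^2 = Δ^8 / (n:ℝ)^6 := by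
      field_simp
    have e2 : Δ^8 / (n:ℝ)^6 ≤ Δ^8 := by
      apply div_le_self (by positivity)
      exact one_le_pow₀ hn'
    have h7 : Δ^7 ≤ (1/2:ℝ)^7 := pow_le_pow_left₀ hΔ0.le hΔ 7
    have h8 : Δ^8 ≤ Δ * (1/2:ℝ)^7 := by
      calc Δ^8 = Δ * Δ^7 := by ring
        _ ≤ Δ * (1/2:ℝ)^7 := mul_le_mul_of_nonneg_left h7 hΔ0.le
    rw [e1]
    nlinarith [e2, h8, hΔ0.le, hΔ]
  have hmul : ((1 - Δ/2)^2)^(2*q+1) ≤ (Δ/n)^8 := le_trans s1 (le_trans s2 s3)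
  calc ((1 - Δ/2)^2)^(2*q+1) * (n : ℝ)^2 ≤ (Δ/n)^8 * (n:ℝ)^2 :=
        mul_le_mul_of_nonneg_right hmul (by positivity)
    _ ≤ 1 - (1 - Δ/2)^2 := s4

end PMaux

set_option maxHeartbeats 2000000 in
open scoped Classical in
/-- Power method guarantee: for nonzero `B`, `0 < Δ ≤ 1/2` and
`q ≥ (4/Δ)·ln(n/Δ)`, a uniformly random sign vector `z` satisfies, with probability at least
`1/2`, that `ŷ = (BᵀB)^q z` has `‖ŷ‖ ≥ λmax(BᵀB)^q/n` and `‖Bŷ‖ ≥ (1 - Δ/2)·‖B‖·‖ŷ‖`. -/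
theorem power_method_random_start
    {m n : ℕ} (hn : 1 ≤ n) (B : Matrix (Fin m) (Fin n) ℝ) (hB : B ≠ 0)
    (Δ : ℝ) (hΔ0 : 0 < Δ) (hΔ : Δ ≤ 1 / 2)
    (q : ℕ) (hq : 4 / Δ * Real.log ((n : ℝ) / Δ) ≤ (q : ℝ)) :
    (1 : ℝ) / 2 ≤
      ((Finset.univ.filter fun z : Fin n → Bool =>
          lmax (Bᵀ * B) ^ q / (n : ℝ) ≤
            vecNorm (((Bᵀ * B) ^ q).mulVec fun i => if z i then (1 : ℝ) else -1) ∧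
          (1 - Δ / 2) * matNorm B *
              vecNorm (((Bᵀ * B) ^ q).mulVec fun i => if z i then (1 : ℝ) else -1) ≤
            vecNorm (B.mulVec (((Bᵀ * B) ^ q).mulVec
              fun i => if z i then (1 : ℝ) else -1))).card : ℝ) / 2 ^ n := by
  have hA : (Bᵀ * B).IsHermitian := PMaux.isHermAtA B
  have hn' : (1 : ℝ) ≤ (n : ℝ) := by exact_mod_cast hn
  have hn0 : (0 : ℝ) < (n : ℝ) := by linarith
  haveI : NeZero n := ⟨by omega⟩
  obtain ⟨i₀, hi₀⟩ := Finite.exists_max hA.eigenvalues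
  set lam : Fin n → ℝ := hA.eigenvalues with hlamdef
  have hnonneg : ∀ i, 0 ≤ lam i := fun i => PMaux.eig_nonneg B hA i
  have hlam0 : 0 < lam i₀ := by
    rcases lt_or_eq_of_le (hnonneg i₀) with h | h
    · exact h
    · exfalso; apply hB
      have hall : ∀ i, lam i = 0 := by
        intro i
        have h1 := hi₀ i
        rw [← h] at h1
        exact le_antisymm h1 (hnonneg i)
      ext i j
      have h1 : vecNorm (B.mulVec (Pi.single j 1)) ^ 2 = 0 := by
        rw [PMaux.vecNorm_mulVec_sq B hA]
        exact Finset.sum_eq_zero fun k _ => by rw [show hA.eigenvalues k = 0 from hall k]; ring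
      have h2 : B.mulVec (Pi.single j 1) = 0 := by
        apply PMaux.eq_zero_of_sum_sq
        rwa [vecNorm, Real.sq_sqrt (by positivity)] at h1
      have h3 := congrFun h2 i
      rw [Matrix.mulVec_single] at h3
      simpa using h3
  have hmatN : matNorm B = Real.sqrt (lam i₀) := PMaux.matNorm_eq B hA i₀ hi₀
  have hlmax : lmax (Bᵀ * B) = lam i₀ := PMaux.lmax_eq hA i₀ hi₀
  -- # coordinates of sign vectors
  have hsumc : ∀ z : Fin n → Bool,
      ∑ i, PMaux.coords hA (fun i => if z i then (1 : ℝ) else -1) i ^ 2 = (n : ℝ) := by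
    intro z
    rw [PMaux.sum_coords_sq]
    calc ∑ i : Fin n, (if z i then (1:ℝ) else -1) ^ 2 = ∑ _i : Fin n, (1:ℝ) :=
          Finset.sum_congr rfl fun i _ => by split <;> norm_num
      _ = (n : ℝ) := by simp
  -- # deterministic part
  have key : ∀ z : Fin n → Bool,
      1 / (n : ℝ) ≤ PMaux.coords hA (fun i => if z i then (1 : ℝ) else -1) i₀ ^ 2 →
      (lmax (Bᵀ * B) ^ q / (n : ℝ) ≤
          vecNorm (((Bᵀ * B) ^ q).mulVec fun i => if z i then (1 : ℝ) else -1) ∧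
        (1 - Δ / 2) * matNorm B *
            vecNorm (((Bᵀ * B) ^ q).mulVec fun i => if z i then (1 : ℝ) else -1) ≤
          vecNorm (B.mulVec (((Bᵀ * B) ^ q).mulVec
            fun i => if z i then (1 : ℝ) else -1))) := by
    intro z hz
    set v : Fin n → ℝ := fun i => if z i then (1 : ℝ) else -1 with hv
    set c : Fin n → ℝ := PMaux.coords hA v with hc
    set y : Fin n → ℝ := ((Bᵀ * B) ^ q).mulVec v with hy
    have hcy : ∀ i, PMaux.coords hA y i = lam i ^ q * c i := fun i =>
      PMaux.coords_pow_mulVec hA q v i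
    have hynorm : vecNorm y ^ 2 = ∑ i, (lam i ^ q * c i) ^ 2 := by
      rw [PMaux.vecNorm_sq_coords hA]
      exact Finset.sum_congr rfl fun i _ => by rw [hcy i]
    have hBy : vecNorm (B.mulVec y) ^ 2 = ∑ i, lam i * (lam i ^ q * c i) ^ 2 := by
      rw [PMaux.vecNorm_mulVec_sq B hA]
      exact Finset.sum_congr rfl fun i _ => by rw [hcy i]
    have hsum : ∑ i, c i ^ 2 = (n : ℝ) := hsumc z
    have hy0 : 0 ≤ vecNorm y := PMaux.vecNorm_nonneg y
    constructor
    · -- part (i)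
      rw [hlmax]
      have hL0 : 0 ≤ lam i₀ ^ q / (n : ℝ) := by positivity
      refine PMaux.le_of_sq_le_sq hy0 ?_ hL0
      have h1 : (lam i₀ ^ q * c i₀) ^ 2 ≤ vecNorm y ^ 2 := by
        rw [hynorm]
        exact Finset.single_le_sum (f := fun i => (lam i ^ q * c i) ^ 2)
          (fun i _ => sq_nonneg _) (Finset.mem_univ i₀)
      have h2 : (lam i₀ ^ q / (n : ℝ)) ^ 2 ≤ (lam i₀ ^ q * c i₀) ^ 2 := by
        have e : (lam i₀ ^ q * c i₀) ^ 2 = (lam i₀ ^ q) ^ 2 * c i₀ ^ 2 := by ring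
        have e2 : (lam i₀ ^ q / (n : ℝ)) ^ 2 = (lam i₀ ^ q) ^ 2 * (1 / (n:ℝ) ^ 2) := by ring
        rw [e, e2]
        refine mul_le_mul_of_nonneg_left ?_ (by positivity)
        calc (1:ℝ) / (n:ℝ)^2 ≤ 1 / (n:ℝ) := by
              apply one_div_le_one_div_of_le hn0
              nlinarith
          _ ≤ c i₀ ^ 2 := hz
      linarith
    · -- part (ii)
      rw [hmatN]
      have hb0 : (0:ℝ) ≤ 1 - Δ / 2 := by linarith
      have hLHS0 : 0 ≤ (1 - Δ / 2) * Real.sqrt (lam i₀) * vecNorm y := by positivity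
      refine PMaux.le_of_sq_le_sq (PMaux.vecNorm_nonneg _) ?_ hLHS0
      have hsqeq : ((1 - Δ / 2) * Real.sqrt (lam i₀) * vecNorm y) ^ 2
          = (1 - Δ / 2) ^ 2 * lam i₀ * vecNorm y ^ 2 := by
        rw [mul_pow, mul_pow, Real.sq_sqrt hlam0.le]
      rw [hsqeq, hBy, hynorm]
      rw [← sub_nonneg]
      set K : ℝ := (1 - Δ / 2) ^ 2 * lam i₀ with hK
      have hβ0 : (0:ℝ) ≤ (1 - Δ/2) ^ 2 := sq_nonneg _
      have hK0 : 0 ≤ K := mul_nonneg hβ0 hlam0.le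
      set W : ℝ := ((1 - Δ/2) ^ 2) ^ (2*q+1) * lam i₀ ^ (2*q+1) with hW
      have hW0 : 0 ≤ W := by positivity
      have hsplit : ∑ i, lam i * (lam i ^ q * c i) ^ 2
            - (1 - Δ / 2) ^ 2 * lam i₀ * ∑ i, (lam i ^ q * c i) ^ 2
          = ∑ i, (lam i - K) * (lam i ^ q * c i) ^ 2 := by
        rw [Finset.mul_sum, ← Finset.sum_sub_distrib]
        exact Finset.sum_congr rfl fun i _ => by rw [hK]; ring
      rw [hsplit]
      have epow : ∀ i : Fin n, (lam i ^ q * c i) ^ 2 = lam i ^ (2*q) * c i ^ 2 := by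
        intro i
        rw [mul_pow, ← pow_mul, mul_comm q 2]
      have hterm : ∀ i : Fin n, -(W * c i ^ 2) ≤ (lam i - K) * (lam i ^ q * c i) ^ 2 := by
        intro i
        have hLi := hnonneg i
        rcases le_or_gt K (lam i) with h | h
        · have hpos : 0 ≤ (lam i - K) * (lam i ^ q * c i) ^ 2 :=
            mul_nonneg (by linarith) (sq_nonneg _)
          have hneg : -(W * c i ^ 2) ≤ 0 := neg_nonpos.2 (mul_nonneg hW0 (sq_nonneg _))
          linarith
        · have h2q : lam i ^ (2*q) ≤ K ^ (2*q) := pow_le_pow_left₀ hLi h.le _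
          have hKpow : K ^ (2*q) * K = W := by
            rw [hW, hK, ← mul_pow, ← pow_succ]
          calc -(W * c i ^ 2) = -(K ^ (2*q) * K * c i ^ 2) := by rw [hKpow]
            _ ≤ -(lam i ^ (2*q) * K * c i ^ 2) := by
                have hmm := mul_le_mul_of_nonneg_right
                  (mul_le_mul_of_nonneg_right h2q hK0) (sq_nonneg (c i))
                linarith
            _ ≤ (lam i - K) * (lam i ^ (2*q) * c i ^ 2) := by
                nlinarith [mul_nonneg (mul_nonneg (pow_nonneg hLi (2*q)) (sq_nonneg (c i))) hLi]
            _ = (lam i - K) * (lam i ^ q * c i) ^ 2 := by rw [epow i]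
      have hbound : W * (n : ℝ) ≤ (1 - (1 - Δ/2) ^ 2) * lam i₀ ^ (2*q+1) * (1 / (n:ℝ)) := by
        have AN := PMaux.pm_analytic n hn Δ hΔ0 hΔ q hq
        have hAN2 := mul_le_mul_of_nonneg_right AN
          (show (0:ℝ) ≤ lam i₀ ^ (2*q+1) * (1 / (n:ℝ)) by positivity)
        calc W * (n : ℝ)
            = ((1 - Δ/2) ^ 2) ^ (2*q+1) * (n:ℝ) ^ 2 * (lam i₀ ^ (2*q+1) * (1 / (n:ℝ))) := by
              rw [hW]; field_simp
          _ ≤ (1 - (1 - Δ/2) ^ 2) * (lam i₀ ^ (2*q+1) * (1 / (n:ℝ))) := hAN2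
          _ = (1 - (1 - Δ/2) ^ 2) * lam i₀ ^ (2*q+1) * (1 / (n:ℝ)) := by ring
      have hgi₀ : (1 - (1 - Δ/2) ^ 2) * lam i₀ ^ (2*q+1) * (1 / (n:ℝ))
          ≤ (lam i₀ - K) * (lam i₀ ^ q * c i₀) ^ 2 := by
        have h1 : lam i₀ - K = (1 - (1 - Δ/2) ^ 2) * lam i₀ := by rw [hK]; ring
        have h1β : (0:ℝ) ≤ 1 - (1 - Δ/2) ^ 2 := by nlinarith
        rw [h1, epow i₀]
        calc (1 - (1 - Δ/2) ^ 2) * lam i₀ ^ (2*q+1) * (1 / (n:ℝ))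
            ≤ (1 - (1 - Δ/2) ^ 2) * lam i₀ ^ (2*q+1) * (c i₀ ^ 2) := by
              exact mul_le_mul_of_nonneg_left hz (by positivity)
          _ = (1 - (1 - Δ/2) ^ 2) * lam i₀ * (lam i₀ ^ (2*q) * c i₀ ^ 2) := by
              rw [pow_succ]; ring
      have hdecomp : ∑ i, (lam i - K) * (lam i ^ q * c i) ^ 2
          = (lam i₀ - K) * (lam i₀ ^ q * c i₀) ^ 2
            + ∑ i ∈ Finset.univ.erase i₀, (lam i - K) * (lam i ^ q * c i) ^ 2 :=
        (Finset.add_sum_erase _ _ (Finset.mem_univ i₀)).symm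
      have h1 : ∑ i ∈ Finset.univ.erase i₀, -(W * c i ^ 2)
          ≤ ∑ i ∈ Finset.univ.erase i₀, (lam i - K) * (lam i ^ q * c i) ^ 2 :=
        Finset.sum_le_sum fun i _ => hterm i
      have hce : ∑ i ∈ Finset.univ.erase i₀, c i ^ 2 ≤ (n : ℝ) := by
        rw [← hsum]
        exact Finset.sum_le_sum_of_subset_of_nonneg (Finset.erase_subset _ _)
          fun i _ _ => sq_nonneg _
      have h3 : -(W * (n : ℝ)) ≤ ∑ i ∈ Finset.univ.erase i₀, -(W * c i ^ 2) := by
        have he : ∑ i ∈ Finset.univ.erase i₀, -(W * c i ^ 2)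
            = -(W * ∑ i ∈ Finset.univ.erase i₀, c i ^ 2) := by
          rw [Finset.mul_sum]
          simp
        rw [he]
        have := mul_le_mul_of_nonneg_left hce hW0
        linarith
      linarith
  -- # the dominant coordinate of the top eigenvector
  set a : Fin n → ℝ := ⇑(hA.eigenvectorBasis i₀) with hadef
  have ha1 : ∑ j, a j ^ 2 = 1 := by
    have hvb := PMaux.vecNorm_basis hA i₀
    rw [vecNorm, Real.sqrt_eq_one] at hvb
    exact hvb
  obtain ⟨j₀, hj₀⟩ := Finite.exists_max fun j : Fin n => a j ^ 2
  have ht : 1 / (n : ℝ) ≤ a j₀ ^ 2 := by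
    rw [div_le_iff₀ hn0]
    calc (1:ℝ) = ∑ j, a j ^ 2 := ha1.symm
      _ ≤ (n : ℝ) * a j₀ ^ 2 := by
          have hb := Finset.sum_le_card_nsmul Finset.univ (fun j => a j ^ 2) (a j₀ ^ 2)
            (fun j _ => hj₀ j)
          simpa [Finset.card_univ, nsmul_eq_mul] using hb
      _ = a j₀ ^ 2 * (n : ℝ) := mul_comm _ _
  set t : ℝ := |a j₀| with htdef
  have hSform : ∀ z : Fin n → Bool,
      PMaux.coords hA (fun i => if z i then (1 : ℝ) else -1) i₀
        = ∑ j, a j * (if z j then (1 : ℝ) else -1) := by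
    intro z
    rw [PMaux.coords_eq_inner, PMaux.inner_toE']
    rfl
  have hStrig : ∀ z : Fin n → Bool,
      t ≤ |∑ j, a j * (if z j then (1 : ℝ) else -1)| →
      1 / (n : ℝ) ≤ PMaux.coords hA (fun i => if z i then (1 : ℝ) else -1) i₀ ^ 2 := by
    intro z h
    rw [hSform z]
    have h2 : t ^ 2 ≤ |∑ j, a j * (if z j then (1 : ℝ) else -1)| ^ 2 :=
      pow_le_pow_left₀ (abs_nonneg _) h 2
    rw [sq_abs, sq_abs] at h2
    linarith
  -- # the flip involution
  set flip : (Fin n → Bool) → (Fin n → Bool) :=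
    fun z => Function.update z j₀ (!z j₀) with hflip
  have hflipS : ∀ z : Fin n → Bool,
      (∑ j, a j * (if flip z j then (1 : ℝ) else -1))
        - (∑ j, a j * (if z j then (1 : ℝ) else -1))
      = a j₀ * ((if !z j₀ then (1 : ℝ) else -1) - (if z j₀ then (1 : ℝ) else -1)) := by
    intro z
    rw [← Finset.sum_sub_distrib]
    rw [Finset.sum_eq_single j₀]
    · have hzj : flip z j₀ = !z j₀ := by rw [hflip]; exact Function.update_self _ _ _
      rw [hzj]; ring
    · intro j _ hj
      have hzz : flip z j = z j := by rw [hflip]; exact Function.update_of_ne hj _ _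
      rw [hzz]; ring
    · intro h; exact absurd (Finset.mem_univ _) h
  have hflipgood : ∀ z : Fin n → Bool,
      |∑ j, a j * (if z j then (1 : ℝ) else -1)| < t →
      t ≤ |∑ j, a j * (if flip z j then (1 : ℝ) else -1)| := by
    intro z hz
    have hd := hflipS z
    have habs : |(if !z j₀ then (1 : ℝ) else -1) - (if z j₀ then (1 : ℝ) else -1)| = 2 := by
      cases hzj : z j₀ <;> simp [hzj] <;> norm_num
    set S : ℝ := ∑ j, a j * (if z j then (1 : ℝ) else -1)
    set S' : ℝ := ∑ j, a j * (if flip z j then (1 : ℝ) else -1)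
    have h2t : |S' - S| = 2 * t := by
      rw [hd, abs_mul, habs, htdef]; ring
    have h3 : |S' - S| ≤ |S'| + |S| := by
      calc |S' - S| = |S' + -S| := by rw [sub_eq_add_neg]
        _ ≤ |S'| + |-S| := abs_add_le _ _
        _ = |S'| + |S| := by rw [abs_neg]
    linarith
  have hinv : ∀ z, flip (flip z) = z := by
    intro z; funext i
    by_cases hi : i = j₀
    · subst hi
      simp [hflip, Function.update_self]
    · simp [hflip, Function.update_of_ne hi]
  -- # counting
  have main : ∀ (p : (Fin n → Bool) → Prop) (_ : DecidablePred p),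
      (∀ z, t ≤ |∑ j, a j * (if z j then (1 : ℝ) else -1)| → p z) →
      (1 : ℝ) / 2 ≤ ((Finset.univ.filter p).card : ℝ) / 2 ^ n := by
    intro p hp hgood
    have hmaps : ∀ z ∈ Finset.univ.filter (fun z => ¬ p z),
        flip z ∈ Finset.univ.filter p := by
      intro z hzmem
      rw [Finset.mem_filter] at hzmem ⊢
      refine ⟨Finset.mem_univ _, ?_⟩
      apply hgood
      apply hflipgood
      rcases lt_or_ge (|∑ j, a j * (if z j then (1 : ℝ) else -1)|) t with h | h
      · exact h
      · exact absurd (hgood z h) hzmem.2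
    have hinj : Set.InjOn flip ↑(Finset.univ.filter (fun z => ¬ p z)) := by
      intro x _ y _ hxy
      have h := congrArg flip hxy
      rwa [hinv, hinv] at h
    have hle := Finset.card_le_card_of_injOn flip hmaps hinj
    have hadd := Finset.card_filter_add_card_filter_not (s := (Finset.univ : Finset (Fin n → Bool))) p
    have huniv : (Finset.univ : Finset (Fin n → Bool)).card = 2 ^ n := by
      rw [Finset.card_univ]
      simp
    rw [div_le_div_iff₀ (by norm_num) (by positivity)]
    have hnat : 2 ^ n ≤ 2 * (Finset.univ.filter p).card := by omega
    calc (1:ℝ) * 2 ^ n = ((2 ^ n : ℕ) : ℝ) := by push_cast; ring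
      _ ≤ ((2 * (Finset.univ.filter p).card : ℕ) : ℝ) := Nat.cast_le.2 hnat
      _ = ((Finset.univ.filter p).card : ℝ) * 2 := by push_cast; ring
  exact main _ _ fun z h => key z (hStrig z h)
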